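/- Let F be a monic real polynomial with no positive real roots. Then there exists a nonzero polynomial G with nonnegative coefficients such that F·G has nonnegative coefficients. -/
import Mathlib

open Polynomial

lemma amgm_aux (u v d : ℝ) (hu : 0 ≤ u) (hv : 0 ≤ v) (hd : 0 ≤ d)
    (h : d^2 ≤ 4*(u*v)) : d ≤ u + v := by
  nlinarith [sq_nonneg (u - v), sq_nonneg (u + v - d), sq_nonneg (u+v)]

lemma quad_coeff (b c : ℝ) (n j : ℕ) :
    ((X^2 + C b * X + C c) * (1+X)^n).coeff (j+2)
      = (n.choose j : ℝ) + b * (n.choose (j+1) : ℝ) + c * (n.choose (j+2) : ℝ) := by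
  rw [add_mul, add_mul, coeff_add, coeff_add, coeff_X_pow_mul, mul_assoc, coeff_C_mul]
  have h1 : (X * ((1:ℝ[X])+X)^n).coeff (j+1+1) = (((1:ℝ[X])+X)^n).coeff (j+1) :=
    coeff_X_mul _ _
  rw [show j+2 = j+1+1 from rfl, h1, coeff_C_mul,
    coeff_one_add_X_pow, coeff_one_add_X_pow, coeff_one_add_X_pow]

lemma quad_coeff0 (b c : ℝ) (n : ℕ) :
    ((X^2 + C b * X + C c) * (1+X)^n).coeff 0 = c := by
  rw [mul_coeff_zero]
  simp [coeff_one_add_X_pow]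

lemma quad_coeff1 (b c : ℝ) (n : ℕ) :
    ((X^2 + C b * X + C c) * (1+X)^n).coeff 1 = b + c * n := by
  rw [add_mul, add_mul, coeff_add, coeff_add, mul_assoc, coeff_C_mul, coeff_C_mul,
    X_pow_mul, coeff_mul_X_pow']
  have h1 : (X * ((1:ℝ[X])+X)^n).coeff (0+1) = (((1:ℝ[X])+X)^n).coeff 0 :=
    coeff_X_mul _ _
  rw [show (1:ℕ) = 0+1 from rfl, h1, coeff_one_add_X_pow, coeff_one_add_X_pow]
  norm_num

-- key binomial inequality, isolated with clean hypotheses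
set_option maxHeartbeats 1000000 in
lemma binom_ineq (c d : ℝ) (K n j : ℕ) (hc : 0 < c) (hd : 0 < d)
    (hK2 : (2:ℝ) ≤ K)
    (hKc : d^2*(K:ℝ)^2 ≤ 4*c*((K:ℝ)-1)^2)
    (hn1 : (K:ℝ) + d*K ≤ n)
    (hnc : c*(K:ℝ) + c*d*K + d*K ≤ c * (n:ℝ))
    (hjn : j + 2 ≤ n) :
    d * (n.choose (j+1) : ℝ) ≤ (n.choose j : ℝ) + c * (n.choose (j+2) : ℝ) := by
  have hle : j ≤ n := by omega
  have hle1 : j+1 ≤ n := by omega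
  have hA : (0:ℝ) < (n.choose j : ℝ) := by
    have := Nat.choose_pos hle; positivity
  have hB : (0:ℝ) < (n.choose (j+1) : ℝ) := by
    have := Nat.choose_pos hle1; positivity
  have hD : (0:ℝ) < (n.choose (j+2) : ℝ) := by
    have := Nat.choose_pos hjn; positivity
  have hjn' : ((j:ℝ)) + 2 ≤ (n:ℝ) := by exact_mod_cast hjn
  have hq1 : (0:ℝ) < (n:ℝ) - j := by linarith
  have hp1 : (0:ℝ) < (j:ℝ) + 2 := by positivity
  have hAB : (n.choose (j+1) : ℝ) * ((j:ℝ)+1) = (n.choose j : ℝ) * ((n:ℝ) - j) := by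
    have h0 := Nat.choose_succ_right_eq n j
    have h1 : (n.choose (j+1) : ℝ) * ((j:ℝ)+1) = (n.choose j : ℝ) * (((n - j : ℕ)):ℝ) := by
      exact_mod_cast h0
    rw [Nat.cast_sub hle] at h1
    exact h1
  have hBD : (n.choose (j+2) : ℝ) * ((j:ℝ)+2) = (n.choose (j+1) : ℝ) * ((n:ℝ) - (j+1)) := by
    have h0 := Nat.choose_succ_right_eq n (j+1)
    have h1 : (n.choose (j+2) : ℝ) * (((j:ℝ)+1)+1) = (n.choose (j+1) : ℝ) * (((n - (j+1) : ℕ)):ℝ) := by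
      exact_mod_cast h0
    rw [Nat.cast_sub hle1] at h1
    push_cast at h1 ⊢
    linarith
  set u : ℝ := ((j:ℝ)+1)/((n:ℝ)-j) with hu'
  set v : ℝ := c*((n:ℝ)-(j+1))/((j:ℝ)+2) with hv'
  have hu0 : 0 ≤ u := div_nonneg (by positivity) hq1.le
  have hv0 : 0 ≤ v := by
    apply div_nonneg _ hp1.le
    nlinarith
  have huB : u * (n.choose (j+1) : ℝ) = (n.choose j : ℝ) := by
    rw [hu', div_mul_eq_mul_div, mul_comm ((j:ℝ)+1) _, hAB,
      mul_div_assoc, div_self hq1.ne', mul_one]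
  have hvB : v * (n.choose (j+1) : ℝ) = c * (n.choose (j+2) : ℝ) := by
    rw [hv', div_mul_eq_mul_div, mul_assoc, mul_comm ((n:ℝ)-(j+1)) _, ← hBD,
      mul_comm ((n.choose (j+2)):ℝ) ((j:ℝ)+2), ← mul_assoc, mul_comm c ((j:ℝ)+2),
      mul_assoc, mul_comm (((j:ℝ)+2)) _, mul_div_assoc, div_self hp1.ne', mul_one]
  have hduv : d ≤ u + v := by
    rcases le_or_gt ((j:ℝ)+2) K with hjK | hjK
    · -- v is big
      have hv : d ≤ v := by
        rw [hv', le_div_iff₀ hp1]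
        have e1 : c*(j:ℝ) ≤ c*((K:ℝ)-2) := by nlinarith
        have e2 : d*(j:ℝ) ≤ d*((K:ℝ)-2) := by nlinarith
        nlinarith [e1, e2, mul_nonneg (mul_nonneg hc.le hd.le) (by positivity : (0:ℝ) ≤ (K:ℝ))]
      linarith
    · rcases le_or_gt ((n:ℝ)-j) K with hnjK | hnjK
      · -- u is big
        have hu : d ≤ u := by
          rw [hu', le_div_iff₀ hq1]
          have e1 : d*((n:ℝ)-j) ≤ d*K := by nlinarith
          nlinarith
        linarith
      · -- middle: AM-GM
        apply amgm_aux u v d hu0 hv0 hd.le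
        have huv : u*v = (((j:ℝ)+1)*(c*((n:ℝ)-(j+1))))/(((n:ℝ)-j)*((j:ℝ)+2)) := by
          rw [hu', hv', div_mul_div_comm]
        rw [huv, ← mul_div_assoc, le_div_iff₀ (by positivity)]
        have hKpos : (0:ℝ) < K := by linarith
        have h1 : ((K:ℝ)-1)*((j:ℝ)+2) ≤ ((j:ℝ)+1)*K := by nlinarith
        have h2 : ((K:ℝ)-1)*((n:ℝ)-j) ≤ ((n:ℝ)-(j+1))*K := by nlinarith
        have h3 : (((K:ℝ)-1)*((j:ℝ)+2)) * (((K:ℝ)-1)*((n:ℝ)-j))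
            ≤ (((j:ℝ)+1)*K) * (((n:ℝ)-(j+1))*K) := by
          apply mul_le_mul h1 h2 (by nlinarith) (by nlinarith)
        have h4 : (d^2 * (((n:ℝ)-j)*((j:ℝ)+2))) * ((K:ℝ)*K)
            ≤ (4*(((j:ℝ)+1)*(c*((n:ℝ)-(j+1))))) * ((K:ℝ)*K) := by
          nlinarith [mul_le_mul_of_nonneg_right hKc (mul_pos hq1 hp1).le,
            mul_le_mul_of_nonneg_left h3 (by positivity : (0:ℝ) ≤ 4*c)]
        exact le_of_mul_le_mul_right h4 (by positivity)
  have := mul_le_mul_of_nonneg_right hduv hB.le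
  rw [add_mul, huB, hvB] at this
  linarith

lemma quad_lemma (b c : ℝ) (hbc : b^2 < 4*c) :
    ∃ n : ℕ, ∀ k, 0 ≤ ((X^2 + C b * X + C c) * (1+X)^n).coeff k := by
  have hc : 0 < c := by nlinarith [sq_nonneg b]
  rcases le_or_gt 0 b with hb | hb
  · refine ⟨0, fun k => ?_⟩
    match k with
    | 0 => rw [quad_coeff0]; positivity
    | 1 => rw [quad_coeff1]; push_cast; positivity
    | (j+2) =>
      rw [quad_coeff]
      have h1 : (0:ℝ) ≤ (Nat.choose 0 j : ℝ) := by positivity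
      have h2 : (0:ℝ) ≤ (Nat.choose 0 (j+1) : ℝ) := by positivity
      have h3 : (0:ℝ) ≤ (Nat.choose 0 (j+2) : ℝ) := by positivity
      nlinarith
  · have hd : 0 < -b := by linarith
    have hd2 : (-b)^2 < 4*c := by nlinarith
    obtain ⟨K, hK⟩ := exists_nat_ge (max 2 ((8*c+1)/(4*c-(-b)^2)))
    have hK2 : (2:ℝ) ≤ K := le_trans (le_max_left _ _) hK
    have hKe : (8*c+1)/(4*c-(-b)^2) ≤ K := le_trans (le_max_right _ _) hK
    have heps : 0 < 4*c - (-b)^2 := by linarith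
    have hKe' : 8*c + 1 ≤ (4*c - (-b)^2) * K := by
      rw [div_le_iff₀ heps] at hKe; linarith
    have hKc : (-b)^2*(K:ℝ)^2 ≤ 4*c*((K:ℝ)-1)^2 := by nlinarith
    obtain ⟨n, hn⟩ := exists_nat_ge (max ((K:ℝ) + (-b)*K) ((c*K + c*(-b)*K + (-b)*K)/c))
    have hn1 : (K:ℝ) + (-b)*K ≤ n := le_trans (le_max_left _ _) hn
    have hnc : c*(K:ℝ) + c*(-b)*K + (-b)*K ≤ c * (n:ℝ) := by
      have h5 := le_trans (le_max_right _ _) hn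
      rw [div_le_iff₀ hc] at h5; linarith
    have hdK : -b ≤ (-b)*K := by nlinarith
    have hnd : -b ≤ (n:ℝ) := by nlinarith
    refine ⟨n, fun k => ?_⟩
    match k with
    | 0 => rw [quad_coeff0]; positivity
    | 1 =>
      rw [quad_coeff1]
      have hdcn : -b ≤ c * n := by nlinarith
      linarith
    | (j+2) =>
      rw [quad_coeff]
      rcases le_or_gt (j+2) n with hjn | hjn
      · have := binom_ineq c (-b) K n j hc hd hK2 hKc hn1 hnc hjn
        nlinarith
      · rcases eq_or_lt_of_le (show n ≤ j+1 by omega) with hjn1 | hjn1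
        · subst hjn1
          rw [Nat.choose_self, Nat.choose_succ_self_right,
            Nat.choose_eq_zero_of_lt (show j+1 < j+2 by omega)]
          push_cast at hnd ⊢
          nlinarith
        · rw [Nat.choose_eq_zero_of_lt (show n < j+1 from hjn1),
            Nat.choose_eq_zero_of_lt (show n < j+2 by omega)]
          push_cast
          have : (0:ℝ) ≤ (n.choose j : ℝ) := by positivity
          linarith


lemma mul_coeff_nonneg (p q : ℝ[X]) (hp : ∀ k, 0 ≤ p.coeff k) (hq : ∀ k, 0 ≤ q.coeff k) :
    ∀ k, 0 ≤ (p * q).coeff k := by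
  intro k
  rw [coeff_mul]
  exact Finset.sum_nonneg fun x _ => mul_nonneg (hp _) (hq _)

lemma quad_disc (b c : ℝ) (h : ∀ r : ℝ, ¬ (X^2 + C b * X + C c : ℝ[X]).IsRoot r) :
    b^2 < 4*c := by
  by_contra hge
  push_neg at hge
  have hs : (Real.sqrt (b^2 - 4*c))^2 = b^2 - 4*c := Real.sq_sqrt (by linarith)
  refine h ((-b + Real.sqrt (b^2 - 4*c))/2) ?_
  rw [IsRoot]
  simp only [eval_add, eval_mul, eval_pow, eval_X, eval_C]
  linear_combination hs / 4


lemma main_aux : ∀ N : ℕ, ∀ F : Polynomial ℝ, F.natDegree ≤ N → F.Monic →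
    (∀ x : ℝ, 0 < x → ¬ F.IsRoot x) →
    ∃ G : Polynomial ℝ, G ≠ 0 ∧ (∀ k, 0 ≤ G.coeff k) ∧ ∀ k, 0 ≤ (F * G).coeff k := by
  intro N
  induction N with
  | zero =>
    intro F hdeg hF _
    have hF1 : F = 1 := hF.natDegree_eq_zero.mp (Nat.le_zero.mp hdeg)
    refine ⟨1, one_ne_zero, fun k => ?_, fun k => ?_⟩
    · rw [coeff_one]; split_ifs <;> norm_num
    · rw [hF1, one_mul, coeff_one]; split_ifs <;> norm_num
  | succ N ih =>
    intro F hdeg hF hroots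
    by_cases h0 : F.natDegree = 0
    · have hF1 : F = 1 := hF.natDegree_eq_zero.mp h0
      refine ⟨1, one_ne_zero, fun k => ?_, fun k => ?_⟩
      · rw [coeff_one]; split_ifs <;> norm_num
      · rw [hF1, one_mul, coeff_one]; split_ifs <;> norm_num
    · have hFne : F ≠ 0 := hF.ne_zero
      have hFnu : ¬ IsUnit F := fun hu => h0 (by rw [hF.eq_one_of_isUnit hu]; simp)
      obtain ⟨p, hpi, hpd⟩ := WfDvdMonoid.exists_irreducible_factor hFnu hFne
      have hp0 : p ≠ 0 := hpi.ne_zero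
      set q : ℝ[X] := p * C p.leadingCoeff⁻¹ with hq'
      have hqm : q.Monic := monic_mul_leadingCoeff_inv hp0
      have hu : IsUnit (C p.leadingCoeff⁻¹) :=
        isUnit_C.mpr (isUnit_iff_ne_zero.mpr (inv_ne_zero (leadingCoeff_ne_zero.mpr hp0)))
      have hassoc : Associated p q := ⟨hu.unit, by rw [IsUnit.unit_spec]⟩
      have hqirr : Irreducible q := hassoc.irreducible hpi
      have hqd : q ∣ F := hassoc.symm.dvd.trans hpd
      obtain ⟨Q, hQ⟩ := hqd
      have hQm : Q.Monic := hqm.of_mul_monic_left (hQ ▸ hF)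
      have hq0 : q ≠ 0 := hqm.ne_zero
      have hQ0 : Q ≠ 0 := hQm.ne_zero
      have hdegm : F.natDegree = q.natDegree + Q.natDegree := by
        rw [hQ]; exact natDegree_mul hq0 hQ0
      have hq1 : 1 ≤ q.natDegree := by
        rcases Nat.eq_zero_or_pos q.natDegree with h | h
        · exact absurd (hqm.natDegree_eq_zero.mp h ▸ isUnit_one) hqirr.not_isUnit
        · exact h
      have hQd : Q.natDegree ≤ N := by omega
      have hQroots : ∀ x : ℝ, 0 < x → ¬ Q.IsRoot x := by
        intro x hx hr
        exact hroots x hx (by rw [IsRoot, hQ, eval_mul, hr.eq_zero, mul_zero])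
      obtain ⟨G2, hG2ne, hG2c, hQG2⟩ := ih Q hQd hQm hQroots
      have hq2 : q.natDegree ≤ 2 := hqirr.natDegree_le_two
      rcases (show q.natDegree = 1 ∨ q.natDegree = 2 by omega) with hdq | hdq
      · -- linear factor
        have hco1 : q.coeff 1 = 1 := by
          have := hqm.coeff_natDegree
          rwa [hdq] at this
        have hqeq : q = X + C (q.coeff 0) := by
          have := eq_X_add_C_of_natDegree_le_one (hdq.le)
          rwa [hco1, map_one, one_mul] at this
        have ha : 0 ≤ q.coeff 0 := by
          by_contra hlt
          push_neg at hlt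
          refine hroots (-(q.coeff 0)) (by linarith) ?_
          rw [IsRoot, hQ, eval_mul]
          have : q.eval (-(q.coeff 0)) = 0 := by rw [hqeq]; simp
          rw [this, zero_mul]
        have hqc : ∀ k, 0 ≤ q.coeff k := by
          intro k
          rw [hqeq]
          match k with
          | 0 => simpa using ha
          | 1 => simp
          | (j+2) => simp [coeff_X, coeff_C]
        refine ⟨G2, hG2ne, hG2c, fun k => ?_⟩
        rw [hQ, mul_assoc]
        exact mul_coeff_nonneg q (Q * G2) hqc hQG2 k
      · -- quadratic factor
        have hco2 : q.coeff 2 = 1 := by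
          have := hqm.coeff_natDegree
          rwa [hdq] at this
        have hqeq : q = X^2 + C (q.coeff 1) * X + C (q.coeff 0) := by
          apply Polynomial.ext
          intro k
          match k with
          | 0 => simp
          | 1 => simp [coeff_X_pow]
          | 2 => simp [coeff_X_pow, hco2]
          | (j+3) =>
            rw [coeff_eq_zero_of_natDegree_lt (by omega : q.natDegree < j+3)]
            simp [coeff_X_pow, coeff_C]
        have hnoroot : ∀ r : ℝ, ¬ q.IsRoot r := by
          intro r hr
          obtain ⟨w, hw⟩ := dvd_iff_isRoot.mpr hr
          rcases hqirr.isUnit_or_isUnit hw with h1 | h2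
          · exact not_isUnit_X_sub_C r h1
          · have hw0 : w ≠ 0 := h2.ne_zero
            have : q.natDegree = 1 := by
              rw [hw, natDegree_mul (X_sub_C_ne_zero r) hw0,
                natDegree_eq_zero_of_isUnit h2, natDegree_X_sub_C]
            omega
        have hdisc : (q.coeff 1)^2 < 4 * (q.coeff 0) :=
          quad_disc _ _ (fun r hr => hnoroot r (hqeq ▸ hr))
        obtain ⟨n, hqn⟩ := quad_lemma (q.coeff 1) (q.coeff 0) hdisc
        rw [← hqeq] at hqn
        have h1X : ((1:ℝ[X]) + X) ≠ 0 := fun hz => by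
          have := congrArg (fun r => r.coeff 0) hz
          simp at this
        refine ⟨(1+X)^n * G2, mul_ne_zero (pow_ne_zero n h1X) hG2ne, ?_, ?_⟩
        · apply mul_coeff_nonneg
          · intro k; rw [coeff_one_add_X_pow]; positivity
          · exact hG2c
        · intro k
          have hrearr : F * ((1+X)^n * G2) = (q * (1+X)^n) * (Q * G2) := by
            rw [hQ]; ring
          rw [hrearr]
          exact mul_coeff_nonneg _ _ hqn hQG2 k

theorem stmt10 (F : Polynomial ℝ) (hF : F.Monic)
    (h : ∀ x : ℝ, 0 < x → ¬ F.IsRoot x) :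
    ∃ G : Polynomial ℝ, G ≠ 0 ∧ (∀ k, 0 ≤ G.coeff k) ∧ ∀ k, 0 ≤ (F * G).coeff k := by
  exact main_aux F.natDegree F le_rfl hF h
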